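/- Let p be a prime and let n, m be positive integers with kp ≤ n < m < (k+1)p for some positive integer k. Then the p-Sylow subgroups of S_n and S_m are isomorphic; moreover any p-Sylow subgroup of S_n maps onto a p-Sylow subgroup of S_m under the natural inclusion S_n ↪ S_m. -/
import Mathlib

lemma factorization_factorial_stable (p : ℕ) (hp : p.Prime) (k n : ℕ)
    (h1 : k * p ≤ n) : ∀ m, n ≤ m → m < (k + 1) * p →
    (Nat.factorial m).factorization p = (Nat.factorial n).factorization p := by
  intro m
  induction m with
  | zero => intro h _; simp [Nat.le_zero.mp h]
  | succ j ih =>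
    intro hnm h3
    rcases Nat.lt_or_ge n (j+1) with h | h
    · have hj : n ≤ j := by omega
      have hjp : ¬ p ∣ (j + 1) := by
        rintro ⟨t, ht⟩
        rw [mul_comm] at ht
        have h4 : k * p < t * p := by omega
        have h5 : t * p < (k + 1) * p := by omega
        have := Nat.lt_of_mul_lt_mul_right h4
        have := Nat.lt_of_mul_lt_mul_right h5
        omega
      rw [Nat.factorial_succ, Nat.factorization_mul (by omega) (Nat.factorial_ne_zero j),
        Finsupp.add_apply, Nat.factorization_eq_zero_of_not_dvd hjp]
      simpa using ih hj (by omega)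
    · have : n = j + 1 := by omega
      rw [this]

/-- Let `p` be a prime and `n, m` positive integers with
`kp ≤ n < m < (k+1)p` for some positive integer `k`.  Then the `p`-Sylow subgroups of `S_n`
and `S_m` are isomorphic; moreover any `p`-Sylow subgroup of `S_n` maps onto a `p`-Sylow
subgroup of `S_m` under the natural inclusion `S_n ↪ S_m`. -/
theorem sylow_symm_group_stable (p : ℕ) [Fact p.Prime] (k n m : ℕ) (hk : 1 ≤ k)
    (h1 : k * p ≤ n) (h2 : n < m) (h3 : m < (k + 1) * p) (hnm : n ≤ m) :
    (∀ (P : Sylow p (Equiv.Perm (Fin n))) (Q : Sylow p (Equiv.Perm (Fin m))),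
        Nonempty (P ≃* Q)) ∧
    (∀ P : Sylow p (Equiv.Perm (Fin n)),
        ∃ Q : Sylow p (Equiv.Perm (Fin m)),
          Subgroup.map
            (Equiv.Perm.viaEmbeddingHom (Fin.castLEEmb hnm))
            (P : Subgroup (Equiv.Perm (Fin n))) = (Q : Subgroup (Equiv.Perm (Fin m)))) := by
  have hp := (Fact.out : p.Prime)
  have hcardn : Nat.card (Equiv.Perm (Fin n)) = Nat.factorial n := by
    simp [Nat.card_eq_fintype_card, Fintype.card_perm]
  have hcardm : Nat.card (Equiv.Perm (Fin m)) = Nat.factorial m := by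
    simp [Nat.card_eq_fintype_card, Fintype.card_perm]
  have hfac : (Nat.card (Equiv.Perm (Fin m))).factorization p
      = (Nat.card (Equiv.Perm (Fin n))).factorization p := by
    rw [hcardn, hcardm]
    exact factorization_factorial_stable p hp k n h1 m hnm h3
  have hinj := Equiv.Perm.viaEmbeddingHom_injective (Fin.castLEEmb hnm)
  -- For any Sylow P of S_n, its image has the right cardinality
  have key : ∀ P : Sylow p (Equiv.Perm (Fin n)),
      Nat.card (Subgroup.map (Equiv.Perm.viaEmbeddingHom (Fin.castLEEmb hnm))
        (P : Subgroup (Equiv.Perm (Fin n))))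
      = p ^ (Nat.card (Equiv.Perm (Fin m))).factorization p := by
    intro P
    have := Nat.card_congr
      (Subgroup.equivMapOfInjective (P : Subgroup (Equiv.Perm (Fin n))) _ hinj).toEquiv
    rw [← this, hfac]
    exact P.card_eq_multiplicity
  constructor
  · intro P Q
    let Q' : Sylow p (Equiv.Perm (Fin m)) := Sylow.ofCard _ (key P)
    have e1 : P ≃* Q' :=
      (Subgroup.equivMapOfInjective (P : Subgroup (Equiv.Perm (Fin n))) _ hinj).trans
        (MulEquiv.subgroupCongr (by simp [Q', Sylow.coe_ofCard]))
    exact ⟨e1.trans (Sylow.equiv Q' Q)⟩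
  · intro P
    exact ⟨Sylow.ofCard _ (key P), by simp [Sylow.coe_ofCard]⟩
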